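/- The homomorphism φ : F_n → F_{2n} between free groups determined by sending the i-th generator x_i to the commutator [x_{2i}, x_{2i+1}] (0 ≤ i < n) is injective. -/

import Mathlib

open scoped commutatorElement

/-- The homomorphism `F_n → F_{2n}` sending the `i`-th generator `xᵢ` to the
commutator `⁅x_{2i}, x_{2i+1}⁆`. -/
noncomputable def phi (n : ℕ) : FreeGroup (Fin n) →* FreeGroup (Fin (2 * n)) :=
  FreeGroup.lift fun i =>
    ⁅FreeGroup.of (⟨2 * (i : ℕ), by have := i.isLt; omega⟩ : Fin (2 * n)),
     FreeGroup.of (⟨2 * (i : ℕ) + 1, by have := i.isLt; omega⟩ : Fin (2 * n))⁆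

namespace PhiAux

open FreeGroup List

variable {α : Type*} [DecidableEq α]

/-- Adjacent letters don't cancel. -/
def NC {α : Type*} (x y : α × Bool) : Prop := ¬(x.1 = y.1 ∧ x.2 = !y.2)

lemma reduce_eq_self_of_chain : ∀ {L : List (α × Bool)}, List.IsChain NC L → reduce L = L
  | [], _ => rfl
  | [x], _ => rfl
  | x :: y :: L, h => by
    have h1 := reduce_eq_self_of_chain (List.isChain_cons_cons.1 h).2
    rw [reduce.cons, h1]
    dsimp only
    rw [if_neg (List.isChain_cons_cons.1 h).1]

lemma chain'_of_reduce_eq (L : List (α × Bool)) (h : reduce L = L) : List.IsChain NC L := by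
  induction L with
  | nil => exact List.isChain_nil
  | cons x L ih =>
    rw [reduce.cons] at h
    have hlen := Red.length_le (reduce.red (L := L))
    rcases hL : reduce L with _ | ⟨hd, tl⟩
    · rw [hL] at h
      dsimp only at h
      obtain rfl : L = [] := by injection h with _ h2; exact h2.symm
      exact List.isChain_singleton x
    · rw [hL] at h hlen
      dsimp only at h
      by_cases hc : x.1 = hd.1 ∧ x.2 = !hd.2
      · rw [if_pos hc] at h
        have := congrArg List.length h
        simp at this hlen; omega
      · rw [if_neg hc] at h
        have hL2 : L = hd :: tl := by injection h with _ h2; exact h2.symm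
        rw [hL2]
        exact List.isChain_cons_cons.2 ⟨hc, hL2 ▸ ih (hL2 ▸ hL)⟩

/-- The block of four letters that a generator maps to. -/
def blk (n : ℕ) : Fin n × Bool → List (Fin (2 * n) × Bool)
  | (i, e) =>
    let a : Fin (2 * n) := ⟨2 * (i : ℕ), by have := i.isLt; omega⟩
    let b : Fin (2 * n) := ⟨2 * (i : ℕ) + 1, by have := i.isLt; omega⟩
    if e then [(a, true), (b, true), (a, false), (b, false)]
    else [(b, true), (a, true), (b, false), (a, false)]

lemma phi_mk_single (n : ℕ) (x : Fin n × Bool) :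
    phi n (FreeGroup.mk [x]) = FreeGroup.mk (blk n x) := by
  obtain ⟨i, e⟩ := x
  cases e
  · have h1 : FreeGroup.mk [(i, false)] = (FreeGroup.of i)⁻¹ := by
      show _ = (FreeGroup.mk [(i, true)])⁻¹
      rw [FreeGroup.inv_mk]; rfl
    rw [h1, _root_.map_inv, phi, FreeGroup.lift_apply_of, commutatorElement_inv, commutatorElement_def]
    show FreeGroup.mk _ * FreeGroup.mk _ * (FreeGroup.mk _)⁻¹ * (FreeGroup.mk _)⁻¹ = _
    rw [FreeGroup.inv_mk, FreeGroup.inv_mk, FreeGroup.mul_mk, FreeGroup.mul_mk, FreeGroup.mul_mk]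
    rfl
  · have h1 : FreeGroup.mk [(i, true)] = FreeGroup.of i := rfl
    rw [h1, phi, FreeGroup.lift_apply_of, commutatorElement_def]
    show FreeGroup.mk _ * FreeGroup.mk _ * (FreeGroup.mk _)⁻¹ * (FreeGroup.mk _)⁻¹ = _
    rw [FreeGroup.inv_mk, FreeGroup.inv_mk, FreeGroup.mul_mk, FreeGroup.mul_mk, FreeGroup.mul_mk]
    rfl

lemma phi_mk (n : ℕ) : ∀ L : List (Fin n × Bool),
    phi n (FreeGroup.mk L) = FreeGroup.mk (L.flatMap (blk n))
  | [] => by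
    have : FreeGroup.mk ([] : List (Fin n × Bool)) = 1 := FreeGroup.one_eq_mk.symm
    rw [this, _root_.map_one]
    exact FreeGroup.one_eq_mk
  | x :: L => by
    have : FreeGroup.mk (x :: L) = FreeGroup.mk [x] * FreeGroup.mk L := by
      rw [FreeGroup.mul_mk]; rfl
    rw [this, _root_.map_mul, phi_mk_single, phi_mk n L, FreeGroup.mul_mk, List.flatMap_cons]

lemma chain_blk (n : ℕ) : ∀ {L : List (Fin n × Bool)},
    List.IsChain NC L → List.IsChain NC (L.flatMap (blk n))
  | [], _ => by simp
  | [x], _ => by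
    obtain ⟨i, e⟩ := x
    cases e <;> simp [blk, NC, Fin.ext_iff] <;> omega
  | x :: y :: L, h => by
    rw [List.flatMap_cons]
    refine List.IsChain.append ?_ (chain_blk n (List.isChain_cons_cons.1 h).2) ?_
    · obtain ⟨i, e⟩ := x
      cases e <;> simp [blk, NC, Fin.ext_iff] <;> omega
    · intro z hz w hw
      have hNC := (List.isChain_cons_cons.1 h).1
      obtain ⟨i, e⟩ := x
      obtain ⟨j, e'⟩ := y
      have hw' : w ∈ (blk n (j, e')).head? := by
        rw [List.flatMap_cons, List.head?_append_of_ne_nil] at hw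
        · exact hw
        · cases e' <;> simp [blk]
      cases e <;> cases e' <;>
        simp [blk, NC, Fin.ext_iff] at hz hw' hNC ⊢ <;> subst hz <;> subst hw' <;>
        simp [NC, Fin.ext_iff] <;> omega

end PhiAux

open PhiAux in
/-- The homomorphism `φ : F_n → F_{2n}` is injective. -/
theorem phi_injective (n : ℕ) : Function.Injective (phi n) := by
  refine (injective_iff_map_eq_one (phi n)).2 fun w hw => ?_
  by_contra hne
  have hred : FreeGroup.reduce w.toWord = w.toWord := FreeGroup.reduce_toWord w
  have hchain := chain'_of_reduce_eq _ hred
  have h1 : phi n w = FreeGroup.mk ((w.toWord).flatMap (blk n)) := by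
    conv_lhs => rw [← FreeGroup.mk_toWord (x := w)]
    exact phi_mk n _
  rw [h1] at hw
  have h2 := congrArg FreeGroup.toWord hw
  rw [FreeGroup.toWord_mk, FreeGroup.toWord_one,
    reduce_eq_self_of_chain (chain_blk n hchain)] at h2
  have hnil : w.toWord ≠ [] := fun h => hne (FreeGroup.toWord_eq_nil_iff.1 h)
  rcases hL : w.toWord with _ | ⟨⟨i, e⟩, L⟩
  · exact hnil hL
  · rw [hL, List.flatMap_cons] at h2
    have := congrArg List.length h2
    cases e <;> simp [blk] at this
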